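/- Let β > 0 be a real number and n a positive integer. Define u : (0, π/2) → ℝ by u(x) = ∑_{ℓ=0}^{n} (−1)^ℓ · binom(n,ℓ) · (∏_{i=0}^{ℓ−1} (n+β+i)) / (∏_{i=0}^{ℓ−1} (β+1+i)) · cos(x)^{β+2ℓ}, where cos(x)^β = exp(β·log cos x). Then for every x ∈ (0, π/2) one has u''(x) − u'(x)/(sin x · cos x) − β²·tan²(x)·u(x) = −4n(n+β)·u(x). -/

import Mathlib

open Real

noncomputable def gsC (β : ℝ) (n l : ℕ) : ℝ :=
  (-1 : ℝ) ^ l * (n.choose l) * (∏ i ∈ Finset.range l, ((n : ℝ) + β + i)) /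
    (∏ i ∈ Finset.range l, (β + 1 + i))

lemma gsC_rec (β : ℝ) (hβ : 0 < β) (n l : ℕ) (hl : l < n) :
    gsC β n (l+1) * (((l:ℝ)+1) * (((l:ℝ)+1)+β)) =
      gsC β n l * (((l:ℝ) - n) * ((l:ℝ) + n + β)) := by
  have hQ : (∏ i ∈ Finset.range l, (β + 1 + (i:ℝ))) ≠ 0 := by
    refine ne_of_gt (Finset.prod_pos fun i _ => by positivity)
  have hQ2 : β + 1 + (l:ℝ) ≠ 0 := by positivity
  have hch : ((n.choose (l+1) : ℝ)) * ((l:ℝ)+1) = (n.choose l : ℝ) * ((n:ℝ) - l) := by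
    have h2 := congrArg (Nat.cast : ℕ → ℝ) (Nat.choose_succ_right_eq n l)
    push_cast [Nat.cast_sub hl.le] at h2
    linarith
  unfold gsC
  rw [Finset.prod_range_succ, Finset.prod_range_succ, pow_succ]
  field_simp
  linear_combination (-(((n:ℝ) + β + l) * ((l:ℝ) + 1 + β))) * hch

lemma gs_alg (β l s co A g : ℝ) (hs : s ≠ 0) (hco : co ≠ 0) (h : s^2 = 1 - co^2) :
    g * ((β+2*l) * ((β+2*l-1) * (A/co/co) * (-s)) * (-s) + (β+2*l) * (A/co) * (-co))
      - g * ((β+2*l) * (A/co) * (-s)) / (s * co)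
      - β^2 * (s/co)^2 * (g * A)
    = g * (4*l*(l+β)) * (A/co^2) - g * (4*l*(l+β)) * A := by
  field_simp
  linear_combination (g*A*(4*l^2 + 4*l*β - β - 2*l)) * h

/-- Aharonov–Bohm Grushin sphere: for real `β > 0`, the terminating
hypergeometric function `u(x) = cos(x)^β · F(−n, n+β; β+1; cos²x)` (with real
powers `cos(x)^β = exp(β log cos x)`) satisfies the fiber eigenvalue equation
`u'' − u'/(sin x cos x) − β² tan²x · u = −4n(n+β)·u` on `(0, π/2)`. -/
theorem grushin_sphere_ab_eigenfunction (β : ℝ) (hβ : 0 < β) (n : ℕ) (hn : 0 < n)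
    (u : ℝ → ℝ)
    (hu : ∀ x : ℝ, u x = ∑ l ∈ Finset.range (n + 1),
      (-1 : ℝ) ^ l * (n.choose l) *
        (∏ i ∈ Finset.range l, ((n : ℝ) + β + i)) /
        (∏ i ∈ Finset.range l, (β + 1 + i)) *
        Real.cos x ^ (β + 2 * l) ) :
    ∀ x : ℝ, x ∈ Set.Ioo 0 (Real.pi / 2) →
      deriv (deriv u) x - deriv u x / (Real.sin x * Real.cos x)
        - β ^ 2 * Real.tan x ^ 2 * u x
        = -(4 * n * ((n : ℝ) + β)) * u x := by
  have huU : u = fun y => ∑ l ∈ Finset.range (n + 1),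
      gsC β n l * Real.cos y ^ (β + 2 * l) := by
    funext y; rw [hu]; simp only [gsC]
  intro x hx
  obtain ⟨hx0, hx2⟩ := hx
  have hπ := Real.pi_pos
  have hc : 0 < Real.cos x := Real.cos_pos_of_mem_Ioo ⟨by linarith, hx2⟩
  have hs : 0 < Real.sin x := Real.sin_pos_of_pos_of_lt_pi hx0 (by linarith)
  have hD : ∀ (p y : ℝ), Real.cos y ≠ 0 →
      HasDerivAt (fun z => Real.cos z ^ p) (p * Real.cos y ^ (p-1) * (-Real.sin y)) y :=
    fun p y h => (Real.hasDerivAt_rpow_const (Or.inl h)).comp y (Real.hasDerivAt_cos y)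
  -- first derivative
  have hU1 : ∀ y : ℝ, Real.cos y ≠ 0 → HasDerivAt u
      (∑ l ∈ Finset.range (n + 1),
        gsC β n l * ((β + 2 * l) * Real.cos y ^ (β + 2 * l - 1) * (-Real.sin y))) y := by
    intro y h
    rw [huU]
    exact HasDerivAt.fun_sum fun l _ => (hD (β + 2 * l) y h).const_mul (gsC β n l)
  have hop : IsOpen {y : ℝ | 0 < Real.cos y} := isOpen_lt continuous_const Real.continuous_cos
  have hev : deriv u =ᶠ[nhds x] (fun y => ∑ l ∈ Finset.range (n + 1),
      gsC β n l * ((β + 2 * l) * Real.cos y ^ (β + 2 * l - 1) * (-Real.sin y))) := by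
    filter_upwards [hop.mem_nhds hc] with y hy
    exact (hU1 y (ne_of_gt hy)).deriv
  have hdd : deriv (deriv u) x = deriv (fun y => ∑ l ∈ Finset.range (n + 1),
      gsC β n l * ((β + 2 * l) * Real.cos y ^ (β + 2 * l - 1) * (-Real.sin y))) x :=
    hev.deriv_eq
  have hd1x : deriv u x = ∑ l ∈ Finset.range (n + 1),
      gsC β n l * ((β + 2 * l) * Real.cos x ^ (β + 2 * l - 1) * (-Real.sin x)) :=
    (hU1 x hc.ne').deriv
  -- second derivative
  have hD1' : HasDerivAt (fun y => ∑ l ∈ Finset.range (n + 1),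
      gsC β n l * ((β + 2 * l) * Real.cos y ^ (β + 2 * l - 1) * (-Real.sin y)))
      (∑ l ∈ Finset.range (n + 1), gsC β n l *
        ((β + 2 * l) * ((β + 2 * l - 1) * Real.cos x ^ (β + 2 * l - 1 - 1) * (-Real.sin x)) * (-Real.sin x)
          + (β + 2 * l) * Real.cos x ^ (β + 2 * l - 1) * (-Real.cos x))) x := by
    refine HasDerivAt.fun_sum fun l _ => ?_
    exact (((hD (β + 2 * l - 1) x hc.ne').const_mul (β + 2 * l)).mul
      ((Real.hasDerivAt_sin x).neg)).const_mul (gsC β n l)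
  have hdd2 : deriv (deriv u) x = ∑ l ∈ Finset.range (n + 1), gsC β n l *
        ((β + 2 * l) * ((β + 2 * l - 1) * Real.cos x ^ (β + 2 * l - 1 - 1) * (-Real.sin x)) * (-Real.sin x)
          + (β + 2 * l) * Real.cos x ^ (β + 2 * l - 1) * (-Real.cos x)) := by
    rw [hdd]; exact hD1'.deriv
  rw [hdd2, hd1x, huU]
  -- reduce to a sum identity
  have hsum : (∑ l ∈ Finset.range (n + 1), gsC β n l *
        ((β + 2 * l) * ((β + 2 * l - 1) * Real.cos x ^ (β + 2 * l - 1 - 1) * (-Real.sin x)) * (-Real.sin x)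
          + (β + 2 * l) * Real.cos x ^ (β + 2 * l - 1) * (-Real.cos x)))
      - (∑ l ∈ Finset.range (n + 1),
          gsC β n l * ((β + 2 * l) * Real.cos x ^ (β + 2 * l - 1) * (-Real.sin x))) / (Real.sin x * Real.cos x)
      - β ^ 2 * Real.tan x ^ 2 * (∑ l ∈ Finset.range (n + 1), gsC β n l * Real.cos x ^ (β + 2 * l))
      = ∑ l ∈ Finset.range (n + 1),
          (gsC β n l * (4 * l * (l + β)) * Real.cos x ^ (β + 2 * l - 2)
            - gsC β n l * (4 * l * (l + β)) * Real.cos x ^ (β + 2 * l)) := by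
    rw [Finset.sum_div, Finset.mul_sum, ← Finset.sum_sub_distrib, ← Finset.sum_sub_distrib]
    refine Finset.sum_congr rfl fun l _ => ?_
    have e1 : Real.cos x ^ (β + 2 * (l:ℝ) - 1) = Real.cos x ^ (β + 2 * (l:ℝ)) / Real.cos x :=
      Real.rpow_sub_one hc.ne' _
    have e11 : Real.cos x ^ (β + 2 * (l:ℝ) - 1 - 1)
        = Real.cos x ^ (β + 2 * (l:ℝ)) / Real.cos x / Real.cos x := by
      rw [Real.rpow_sub_one hc.ne', e1]
    have e2 : Real.cos x ^ (β + 2 * (l:ℝ) - 2)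
        = Real.cos x ^ (β + 2 * (l:ℝ)) / Real.cos x ^ 2 := by
      rw [show β + 2 * (l:ℝ) - 2 = β + 2 * (l:ℝ) - 1 - 1 by ring, e11, div_div, sq]
    rw [e11, e1, e2, Real.tan_eq_sin_div_cos]
    exact gs_alg β l (Real.sin x) (Real.cos x) (Real.cos x ^ (β + 2 * (l:ℝ))) (gsC β n l)
      hs.ne' hc.ne' (Real.sin_sq x)
  rw [hsum, Finset.mul_sum]
  -- index shift
  rw [Finset.sum_sub_distrib, Finset.sum_range_succ' (fun l => gsC β n l * (4 * l * (l + β)) * Real.cos x ^ (β + 2 * (l:ℝ) - 2)) n]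
  have hf0 : gsC β n 0 * (4 * (0:ℕ) * ((0:ℕ) + β)) * Real.cos x ^ (β + 2 * ((0:ℕ):ℝ) - 2) = 0 := by
    norm_num
  rw [hf0, add_zero]
  rw [Finset.sum_range_succ (fun l => gsC β n l * (4 * l * (l + β)) * Real.cos x ^ (β + 2 * (l:ℝ))) n,
    Finset.sum_range_succ (fun l => -(4 * n * ((n:ℝ) + β)) * (gsC β n l * Real.cos x ^ (β + 2 * (l:ℝ)))) n]
  have hterm : ∀ l ∈ Finset.range n,
      gsC β n (l+1) * (4 * ((l:ℕ)+1 : ℕ) * (((l:ℕ)+1 : ℕ) + β)) * Real.cos x ^ (β + 2 * (((l:ℕ)+1 : ℕ):ℝ) - 2)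
      = gsC β n l * (4 * l * (l + β)) * Real.cos x ^ (β + 2 * (l:ℝ))
        + -(4 * n * ((n:ℝ) + β)) * (gsC β n l * Real.cos x ^ (β + 2 * (l:ℝ))) := by
    intro l hl
    rw [Finset.mem_range] at hl
    have hrec := gsC_rec β hβ n l hl
    have hexp : β + 2 * (((l:ℕ)+1 : ℕ):ℝ) - 2 = β + 2 * (l:ℝ) := by push_cast; ring
    rw [hexp]
    push_cast
    linear_combination (4 * Real.cos x ^ (β + 2 * (l:ℝ))) * hrec
  rw [Finset.sum_congr rfl hterm, Finset.sum_add_distrib]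
  ring
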